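/- Every injective module over a Dedekind domain is dual self-CS-Baer; in fact, for every family (f_λ) of endomorphisms of an injective module M over a Dedekind domain, the submodule ∑_λ im(f_λ) is a direct summand of M. -/

import Mathlib

section Defs

variable {R : Type*} [Ring R] {M : Type*} [AddCommGroup M] [Module R M]

/-- `K` is a direct summand of `M`. -/
def IsDirectSummand (K : Submodule R M) : Prop :=
  ∃ K' : Submodule R M, IsCompl K K'

/-- `X` is an essential submodule of `Y`. -/
def EssentialIn (X Y : Submodule R M) : Prop :=
  X ≤ Y ∧ ∀ Z : Submodule R M, Z ≤ Y → X ⊓ Z = ⊥ → Z = ⊥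

/-- `K` is a fully invariant submodule of `M`. -/
def FullyInvariant (K : Submodule R M) : Prop :=
  ∀ f : M →ₗ[R] M, K.map f ≤ K

/-- `L` lies above the direct summand `K`: `K` is a direct summand of `M`, `K ≤ L`
and `L/K` is superfluous (small) in `M/K`. -/
def LiesAbove (L K : Submodule R M) : Prop :=
  IsDirectSummand K ∧ K ≤ L ∧
    ∀ X : Submodule R M, K ≤ X → L ⊔ X = ⊤ → X = ⊤

/-- `lU(X)`: the set of endomorphisms of `M` vanishing on `X`. -/
def lU (X : Submodule R M) : Set (M →ₗ[R] M) :=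
  {f : M →ₗ[R] M | X ≤ LinearMap.ker f}

end Defs

section ModDefs

variable (R : Type*) [Ring R] (M : Type*) [AddCommGroup M] [Module R M]
  (N : Type*) [AddCommGroup N] [Module R N]

/-- `N` is `M`-CS-Rickart. -/
def CSRickart : Prop :=
  ∀ f : M →ₗ[R] N, ∃ K : Submodule R M,
    IsDirectSummand K ∧ EssentialIn (LinearMap.ker f) K

/-- `N` is `M`-CS-Baer. -/
def CSBaer : Prop :=
  ∀ (ι : Type*) (f : ι → (M →ₗ[R] N)), ∃ K : Submodule R M,
    IsDirectSummand K ∧ EssentialIn (⨅ i, LinearMap.ker (f i)) K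

/-- `N` is strongly `M`-CS-Baer. -/
def StrongCSBaer : Prop :=
  ∀ (ι : Type*) (f : ι → (M →ₗ[R] N)), ∃ K : Submodule R M,
    IsDirectSummand K ∧ FullyInvariant K ∧ EssentialIn (⨅ i, LinearMap.ker (f i)) K

/-- `N` is `M`-Baer. -/
def Baer : Prop :=
  ∀ (ι : Type*) (f : ι → (M →ₗ[R] N)),
    IsDirectSummand (⨅ i, LinearMap.ker (f i))

/-- `N` is `M`-𝒦-nonsingular. -/
def KNonsingular : Prop :=
  ∀ f : M →ₗ[R] N, EssentialIn (LinearMap.ker f) (⊤ : Submodule R M) → f = 0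

/-- every direct summand of `M` is fully invariant. -/
def WeakDuo : Prop :=
  ∀ K : Submodule R M, IsDirectSummand K → FullyInvariant K

/-- `M` is extending. -/
def Extending : Prop :=
  ∀ L : Submodule R M, ∃ K : Submodule R M, IsDirectSummand K ∧ EssentialIn L K

/-- `M` is lifting. -/
def Lifting : Prop :=
  ∀ L : Submodule R M, ∃ K : Submodule R M, LiesAbove L K

/-- `M` is dual self-CS-Rickart. -/
def DualSelfCSRickart : Prop :=
  ∀ f : M →ₗ[R] M, ∃ K : Submodule R M, LiesAbove (LinearMap.range f) K

/-- `M` is dual self-CS-Baer. -/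
def DualSelfCSBaer : Prop :=
  ∀ (ι : Type*) (f : ι → (M →ₗ[R] M)), ∃ K : Submodule R M,
    LiesAbove (⨆ i, LinearMap.range (f i)) K

/-- `M` is dual strongly self-CS-Baer. -/
def DualStrongSelfCSBaer : Prop :=
  ∀ (ι : Type*) (f : ι → (M →ₗ[R] M)), ∃ K : Submodule R M,
    FullyInvariant K ∧ LiesAbove (⨆ i, LinearMap.range (f i)) K

/-- `M` is SSIP-extending. -/
def SSIPExtending : Prop :=
  ∀ (ι : Type*) (A : ι → Submodule R M),
    (∀ i, ∃ K : Submodule R M, IsDirectSummand K ∧ EssentialIn (A i) K) →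
    ∃ K : Submodule R M, IsDirectSummand K ∧ EssentialIn (⨅ i, A i) K

/-- `M` is ESSIP. -/
def ESSIP : Prop :=
  ∀ (ι : Type*) (A : ι → Submodule R M), (∀ i, IsDirectSummand (A i)) →
    ∃ K : Submodule R M, IsDirectSummand K ∧ EssentialIn (⨅ i, A i) K

/-- The socle of `M`: the sum of all simple (atomic) submodules. -/
def Socle : Submodule R M := sSup {S : Submodule R M | IsAtom S}

/-- `M` is E-M-𝒦-cononsingular. -/
def ECononsingular : Prop :=
  ∀ X Y : Submodule R M, X ≤ Y → lU X = lU Y → EssentialIn X Y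

/-- `M` is E-M-𝒦-nonsingular. -/
def ENonsingular : Prop :=
  ∀ f : M →ₗ[R] M,
    (∃ K : Submodule R M, IsDirectSummand K ∧ EssentialIn (LinearMap.ker f) K) → f = 0

/-- `M` is nonsingular: the singular submodule vanishes. -/
def Nonsingular : Prop :=
  ∀ x : M, EssentialIn (LinearMap.ker (LinearMap.toSpanSingleton R M x))
      (⊤ : Submodule R R) → x = 0

end ModDefs

/-- `R` is semiperfect: `R/J(R)` is semisimple and idempotents lift modulo `J(R)`. -/
def IsSemiperfectRing (R : Type*) [Ring R] : Prop :=
  IsSemisimpleModule R (R ⧸ Ideal.jacobson (⊥ : Ideal R)) ∧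
    ∀ a : R, a * a - a ∈ Ideal.jacobson (⊥ : Ideal R) →
      ∃ e : R, IsIdempotentElem e ∧ e - a ∈ Ideal.jacobson (⊥ : Ideal R)

/-- `R` is semiregular: every principal (one-sided) ideal of `R` lies above a
direct summand of `R` as a module over itself. -/
def IsSemiregularRing (R : Type*) [Ring R] : Prop :=
  ∀ a : R, ∃ K : Submodule R R, LiesAbove (Submodule.span R {a}) K


section Helpers

open LinearMap
open scoped nonZeroDivisors

universe u v w

namespace DualCSBaerProof

variable {R : Type u} [CommRing R] [IsDomain R] [IsDedekindDomain R]

noncomputable def dualFun (I : Ideal R) (b : FractionRing R)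
    (hb : ∀ x : R, x ∈ I → ∃ r : R, algebraMap R (FractionRing R) r
      = b * algebraMap R (FractionRing R) x) : I →ₗ[R] R where
  toFun x := (hb x.1 x.2).choose
  map_add' x y := by
    apply IsFractionRing.injective R (FractionRing R)
    rw [map_add, (hb x.1 x.2).choose_spec, (hb y.1 y.2).choose_spec,
      (hb (x.1 + y.1) (I.add_mem x.2 y.2)).choose_spec, map_add, mul_add]
  map_smul' r x := by
    apply IsFractionRing.injective R (FractionRing R)
    rw [RingHom.id_apply, smul_eq_mul (a := r), map_mul,
      (hb _ (r • x).2).choose_spec, (hb _ x.2).choose_spec]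
    have : ((r • x : I) : R) = r * (x : R) := rfl
    rw [this, map_mul]; ring

theorem dualFun_spec (I : Ideal R) (b : FractionRing R)
    (hb : ∀ x : R, x ∈ I → ∃ r : R, algebraMap R (FractionRing R) r
      = b * algebraMap R (FractionRing R) x) (x : I) :
    algebraMap R (FractionRing R) (dualFun I b hb x)
      = b * algebraMap R (FractionRing R) x.1 :=
  (hb x.1 x.2).choose_spec

theorem ideal_projective (I : Ideal R) : Module.Projective R I := by
  classical
  by_cases hI : I = ⊥
  · subst hI
    refine Module.projective_def.mpr ⟨0, fun x => ?_⟩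
    have : x = 0 := Subsingleton.elim x 0
    simp [this]
  · set K := FractionRing R
    have hmul : (I : FractionalIdeal R⁰ K) * (I : FractionalIdeal R⁰ K)⁻¹ = 1 :=
      FractionalIdeal.coe_ideal_mul_inv (K := K) I hI
    have h1 : (1 : K) ∈ ((I : FractionalIdeal R⁰ K) * (I : FractionalIdeal R⁰ K)⁻¹) := by
      rw [hmul]; exact FractionalIdeal.one_mem_one _
    rw [← FractionalIdeal.mem_coe, FractionalIdeal.coe_mul] at h1
    have key : ∃ (n : ℕ) (a : Fin n → I) (b : Fin n → K),
        (∀ j, ∀ x : R, x ∈ I → ∃ r : R, algebraMap R K r = b j * algebraMap R K x) ∧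
        ∑ j, algebraMap R K ((a j : R)) * b j = 1 := by
      refine Submodule.mul_induction_on h1 ?_ ?_
      · intro m hm n hn
        rw [FractionalIdeal.mem_coe] at hm hn
        obtain ⟨x, hx, rfl⟩ := (FractionalIdeal.mem_coeIdeal _).mp hm
        refine ⟨1, fun _ => ⟨x, hx⟩, fun _ => n, fun j y hy => ?_, by simp⟩
        have := (FractionalIdeal.mem_inv_iff (by
          simpa using hI : (I : FractionalIdeal R⁰ K) ≠ 0)).mp hn
          (algebraMap R K y) (FractionalIdeal.mem_coeIdeal_of_mem _ hy)
        exact (FractionalIdeal.mem_one_iff _).mp this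
      · rintro x y ⟨n₁, a₁, b₁, hb₁, hs₁⟩ ⟨n₂, a₂, b₂, hb₂, hs₂⟩
        refine ⟨n₁ + n₂, Fin.addCases a₁ a₂, Fin.addCases b₁ b₂, ?_, ?_⟩
        · intro j
          refine Fin.addCases (fun i => by simpa using hb₁ i) (fun i => by simpa using hb₂ i) j
        · rw [Fin.sum_univ_add]
          simp only [Fin.addCases_left, Fin.addCases_right, hs₁, hs₂]
    obtain ⟨n, a, b, hb, hsum⟩ := key
    refine Module.projective_def.mpr
      ⟨∑ j, (dualFun I (b j) (hb j)).smulRight (Finsupp.single (a j) (1 : R)), fun x => ?_⟩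
    have : (Finsupp.linearCombination R (_root_.id : I → I))
        ((∑ j, (dualFun I (b j) (hb j)).smulRight (Finsupp.single (a j) (1 : R))) x)
        = ∑ j, dualFun I (b j) (hb j) x • (a j) := by
      rw [LinearMap.sum_apply, map_sum]
      refine Finset.sum_congr rfl fun j _ => ?_
      simp [LinearMap.smulRight_apply, Finsupp.smul_single]
    rw [this]
    apply Subtype.ext
    apply IsFractionRing.injective R K
    rw [AddSubmonoidClass.coe_finset_sum, map_sum]
    have : ∀ j ∈ Finset.univ, algebraMap R K ((dualFun I (b j) (hb j) x • (a j) : I) : R)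
        = (algebraMap R K (x : R)) * (algebraMap R K ((a j : R)) * b j) := by
      intro j _
      have : ((dualFun I (b j) (hb j) x • (a j) : I) : R)
          = dualFun I (b j) (hb j) x * ((a j : R)) := rfl
      rw [this, map_mul, dualFun_spec]
      ring
    rw [Finset.sum_congr rfl this, ← Finset.mul_sum, hsum, mul_one]

section BaerSide

variable {M : Type v} [AddCommGroup M] [Module R M]

theorem baer_pi {α : Type*} (hB : Module.Baer R M) : Module.Baer R (α → M) := by
  intro I g
  choose E hE using fun a => hB I ((LinearMap.proj a).comp g)
  exact ⟨LinearMap.pi E, fun x hx => funext fun a => hE a x hx⟩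

theorem fg_le_supported {ι : Type w} (W : Submodule R (ι →₀ M)) (hW : W.FG) :
    ∃ s : Finset ι, W ≤ Finsupp.supported M R ↑s := by
  classical
  obtain ⟨T, rfl⟩ := hW
  refine ⟨T.sup Finsupp.support, Submodule.span_le.mpr fun v hv => ?_⟩
  exact (Finsupp.mem_supported R v).mpr (Finset.coe_subset.mpr (Finset.le_sup hv))

theorem range_lsum {ι : Type w} (f : ι → (M →ₗ[R] M)) :
    LinearMap.range (Finsupp.lsum ℕ f) = ⨆ i, LinearMap.range (f i) := by
  apply le_antisymm
  · rintro _ ⟨v, rfl⟩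
    rw [Finsupp.lsum_apply]
    refine Submodule.finsuppSum_mem _ _ _ _ fun i _ => ?_
    exact Submodule.mem_iSup_of_mem i ⟨v i, rfl⟩
  · refine iSup_le fun i => ?_
    rintro _ ⟨m, rfl⟩
    exact ⟨Finsupp.single i m, by simp⟩

theorem baer_range_lsum {ι : Type w} (hB : Module.Baer R M) (f : ι → (M →ₗ[R] M)) :
    Module.Baer R ↥(LinearMap.range (Finsupp.lsum ℕ f)) := by
  classical
  set h : (ι →₀ M) →ₗ[R] M := Finsupp.lsum ℕ f with hh
  intro I g
  haveI := ideal_projective I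
  obtain ⟨ℓ, hℓ⟩ := Module.projective_lifting_property h.rangeRestrict g
      h.surjective_rangeRestrict
  have hfg : (LinearMap.range ℓ).FG := by
    haveI : Module.Finite R I := Module.Finite.iff_fg.mpr (IsNoetherian.noetherian I)
    exact Module.Finite.iff_fg.mp (Module.Finite.range ℓ)
  obtain ⟨s, hs⟩ := fg_le_supported _ hfg
  set π : (ι →₀ M) →ₗ[R] ({ x // x ∈ s } → M) :=
    LinearMap.pi (fun i : s => Finsupp.lapply (i : ι)) with hπ
  obtain ⟨E, hE⟩ := baer_pi hB I (π.comp ℓ)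
  set σ : ({ x // x ∈ s } → M) →ₗ[R] (ι →₀ M) :=
    (Finsupp.lmapDomain M R (Subtype.val)).comp
      (Finsupp.linearEquivFunOnFinite R M s).symm.toLinearMap with hσ
  have hσπ : ∀ v : (ι →₀ M), v ∈ Finsupp.supported M R ↑s → σ (π v) = v := by
    intro v hv
    have hcoe : σ (π v) = Finsupp.mapDomain (Subtype.val : s → ι)
        ((Finsupp.linearEquivFunOnFinite R M s).symm (π v)) := rfl
    ext j
    rw [hcoe]
    by_cases hj : j ∈ s
    · rw [show j = ((⟨j, hj⟩ : s) : ι) from rfl,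
        Finsupp.mapDomain_apply Subtype.val_injective]
      simp [π, Finsupp.linearEquivFunOnFinite]
    · rw [Finsupp.mapDomain_notin_range _ _ (by rintro ⟨⟨i, hi⟩, rfl⟩; exact hj hi)]
      exact ((Finsupp.mem_supported' R v).mp hv j hj).symm
  refine ⟨(h.rangeRestrict.comp σ).comp E, fun x hx => ?_⟩
  have e1 : E x = π (ℓ ⟨x, hx⟩) := hE x hx
  have e2 : σ (π (ℓ ⟨x, hx⟩)) = ℓ ⟨x, hx⟩ := hσπ _ (hs (LinearMap.mem_range_self ℓ ⟨x, hx⟩))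
  calc (h.rangeRestrict.comp σ).comp E x = h.rangeRestrict (σ (E x)) := rfl
  _ = h.rangeRestrict (ℓ ⟨x, hx⟩) := by rw [e1, e2]
  _ = g ⟨x, hx⟩ := DFunLike.congr_fun hℓ ⟨x, hx⟩

end BaerSide

theorem summand_of_injective_submodule {M : Type v} [AddCommGroup M] [Module R M]
    (N : Submodule R M) (hN : Module.Injective R ↥N) :
    IsDirectSummand N := by
  obtain ⟨r, hr⟩ := hN.out N.subtype Subtype.val_injective LinearMap.id
  refine ⟨LinearMap.ker r, ?_, ?_⟩
  · rw [disjoint_iff]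
    refine le_antisymm ?_ bot_le
    rintro x ⟨hxN, hxr⟩
    have : r x = ⟨x, hxN⟩ := hr ⟨x, hxN⟩
    have hx0 : (⟨x, hxN⟩ : N) = 0 := by
      rw [← this]; exact hxr
    simpa using congrArg Subtype.val hx0
  · rw [codisjoint_iff, eq_top_iff]
    intro x _
    have hker : x - (r x : M) ∈ LinearMap.ker r := by
      rw [LinearMap.mem_ker, map_sub]
      have : r ((r x : M)) = r x := hr (r x)
      rw [this, sub_self]
    exact Submodule.mem_sup.mpr ⟨(r x : M), (r x).2, x - (r x : M), hker, by abel⟩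

theorem summand_of_baer {M : Type v} [AddCommGroup M] [Module R M] (hB : Module.Baer R M)
    (ι : Type w) (f : ι → (M →ₗ[R] M)) :
    IsDirectSummand (⨆ i, LinearMap.range (f i)) := by
  rw [← range_lsum f]
  exact summand_of_injective_submodule _ ((baer_range_lsum hB f).injective)

section CaseB

variable {M : Type v} [AddCommGroup M] [Module R M]

theorem pow_classify {P A : Ideal R} (hP : P.IsPrime) (hPbot : P ≠ ⊥) {k : ℕ}
    (hle : P ^ k ≤ A) : ∃ m ≤ k, A = P ^ m := by
  have hprime : Prime P := Ideal.prime_of_isPrime hPbot hP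
  have hdvd : A ∣ P ^ k := Ideal.dvd_iff_le.mpr hle
  obtain ⟨m, hm, hassoc⟩ := (dvd_prime_pow hprime k).mp hdvd
  exact ⟨m, hm, associated_iff_eq.mp hassoc⟩

theorem mem_pow_of_mul_mem {P : Ideal R} (hP : P.IsPrime) (hPbot : P ≠ ⊥) {t : R}
    (ht : t ∈ P) (ht2 : t ∉ P ^ 2) {m : ℕ} {r : R} (h : r * t ∈ P ^ (m + 1)) :
    r ∈ P ^ m := by
  have hprime : Prime P := Ideal.prime_of_isPrime hPbot hP
  obtain ⟨C, hC⟩ : P ∣ Ideal.span {t} :=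
    Ideal.dvd_iff_le.mpr ((Ideal.span_singleton_le_iff_mem _).mpr ht)
  have hPC : ¬ P ∣ C := by
    rintro ⟨D, hD⟩
    apply ht2
    have : Ideal.span {t} ≤ P ^ 2 := by
      rw [hC, hD, ← mul_assoc, ← pow_two]
      exact Ideal.mul_le_inf.trans inf_le_left
    exact this (Ideal.mem_span_singleton_self t)
  have h1 : P ^ (m + 1) ∣ Ideal.span {r} * Ideal.span {t} := by
    rw [Ideal.span_singleton_mul_span_singleton]
    exact Ideal.dvd_iff_le.mpr ((Ideal.span_singleton_le_iff_mem _).mpr h)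
  rw [hC, mul_left_comm, pow_succ, mul_comm (P ^ m) P] at h1
  have h2 : P ^ m ∣ Ideal.span {r} * C :=
    (mul_dvd_mul_iff_left (show P ≠ 0 from hPbot)).mp h1
  have h3 : P ^ m ∣ Ideal.span {r} := hprime.pow_dvd_of_dvd_mul_right m hPC h2
  exact (Ideal.span_singleton_le_iff_mem _).mp (Ideal.le_of_dvd h3)

theorem subsingleton_of_unfaithful {M : Type v} [AddCommGroup M] [Module R M]
    [Module.Injective R M]
    (a : R) (ha : a ≠ 0) (haM : ∀ m : M, a • m = 0) : Subsingleton M := by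
  by_contra hns
  haveI : Nontrivial M := not_subsingleton_iff_nontrivial.mp hns
  obtain ⟨P, hP⟩ := associatedPrimes.nonempty R M
  obtain ⟨hPprime, y, hPy⟩ := isAssociatedPrime_iff.mp hP
  have hy0 : y ≠ 0 := by
    rintro rfl
    apply hPprime.ne_top
    rw [hPy, eq_top_iff]
    intro r _
    rw [Submodule.mem_colon_singleton, smul_zero]
    exact Submodule.zero_mem _
  have htors : Ideal.torsionOf R M y = P := by
    ext r
    rw [Ideal.mem_torsionOf_iff, hPy, Submodule.mem_colon_singleton, Submodule.mem_bot]
  have haP : a ∈ P := by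
    rw [← htors, Ideal.mem_torsionOf_iff]; exact haM y
  have hPbot : P ≠ ⊥ := by
    rintro rfl; exact ha haP
  have hPmax : P.IsMaximal := hPprime.isMaximal hPbot
  obtain ⟨t, ht, ht2⟩ : ∃ t, t ∈ P ∧ t ∉ P ^ 2 := by
    obtain ⟨t, ht, ht2⟩ := SetLike.exists_of_lt (Ideal.pow_succ_lt_pow hPbot 1)
    exact ⟨t, by simpa using ht, ht2⟩
  obtain ⟨e, he⟩ : ∃ e, a ∉ P ^ e := by
    by_contra hc
    push_neg at hc
    have hbot := Ideal.iInf_pow_eq_bot_of_isDomain (I := P) hPmax.ne_top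
    have hmem : a ∈ (⨅ n : ℕ, P ^ n) := (Submodule.mem_iInf _).mpr hc
    rw [hbot] at hmem
    exact ha hmem
  have key : ∀ n : ℕ, ∃ (z : M) (m : ℕ), 1 ≤ m ∧ t ^ n • z = y ∧
      Ideal.torsionOf R M z = P ^ m := by
    intro n
    induction n with
    | zero => exact ⟨y, 1, le_rfl, by simp, by simpa using htors⟩
    | succ n ih =>
      obtain ⟨z, m, hm1, hzn, hztors⟩ := ih
      -- the small test modules
      have hXsmall : Small.{v} (R ⧸ (P ^ m : Ideal R)) := by
        have hker : LinearMap.ker (LinearMap.toSpanSingleton R M z)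
            = (P ^ m : Ideal R) := hztors
        have hinj : Function.Injective
            ((P ^ m : Ideal R).liftQ (LinearMap.toSpanSingleton R M z) hker.ge) := by
          rw [← LinearMap.ker_eq_bot]
          exact Submodule.ker_liftQ_eq_bot _ _ _ hker.le
        exact small_of_injective hinj
      have hPsmall : Small.{v} (R ⧸ (P : Ideal R)) := by
        have hsurj : Function.Surjective
            ((Submodule.mapQ (P ^ m : Ideal R) (P : Ideal R) LinearMap.id
              (by simpa using Ideal.pow_le_pow_right (I := P) hm1))) := by
          intro x
          obtain ⟨r, rfl⟩ := Submodule.Quotient.mk_surjective _ x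
          exact ⟨Submodule.Quotient.mk r, rfl⟩
        exact small_of_surjective hsurj
      -- c generating P^m mod P^(m+1)
      obtain ⟨c, hc, hc2⟩ : ∃ c, c ∈ P ^ m ∧ c ∉ P ^ (m + 1) :=
        SetLike.exists_of_lt (Ideal.pow_succ_lt_pow hPbot m)
      have hcgen : (P ^ m : Ideal R) ≤ Ideal.span {c} ⊔ P ^ (m + 1) := by
        obtain ⟨j, hj, hA⟩ := pow_classify hPprime hPbot
          (le_sup_right : P ^ (m + 1) ≤ Ideal.span {c} ⊔ P ^ (m + 1))
        have hjm : j ≤ m := by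
          by_contra hjm
          have hj1 : j = m + 1 := le_antisymm hj (by omega)
          apply hc2
          rw [← hj1, ← hA]
          exact (le_sup_left : Ideal.span {c} ≤ _) (Ideal.mem_span_singleton_self c)
        rw [hA]
        exact Ideal.pow_le_pow_right hjm
      have hYsmall : Small.{v} (R ⧸ (P ^ (m + 1) : Ideal R)) := by
        classical
        set F : (R ⧸ (P ^ m : Ideal R)) × (R ⧸ (P : Ideal R)) →
            R ⧸ (P ^ (m + 1) : Ideal R) := fun uv =>
          Submodule.Quotient.mk (uv.1.out + uv.2.out * c) with hF
        have hFsurj : Function.Surjective F := by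
          intro zq
          obtain ⟨x, rfl⟩ := Submodule.Quotient.mk_surjective _ zq
          set u : R ⧸ (P ^ m : Ideal R) := Submodule.Quotient.mk x with hu
          have hδ : x - u.out ∈ (P ^ m : Ideal R) := by
            rw [← Submodule.Quotient.eq]
            exact ((Quotient.out_eq u).trans hu).symm
          obtain ⟨rc, hrc, p, hp, hsum⟩ := Submodule.mem_sup.mp (hcgen hδ)
          obtain ⟨rr, rfl⟩ := Ideal.mem_span_singleton'.mp hrc
          set v : R ⧸ (P : Ideal R) := Submodule.Quotient.mk rr with hv
          have hε : rr - v.out ∈ (P : Ideal R) := by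
            rw [← Submodule.Quotient.eq]
            exact ((Quotient.out_eq v).trans hv).symm
          refine ⟨(u, v), ?_⟩
          show Submodule.Quotient.mk (u.out + v.out * c) = Submodule.Quotient.mk x
          rw [Submodule.Quotient.eq]
          have hrew : u.out + v.out * c - x = -(p + (rr - v.out) * c) := by
            have hx : x - u.out = rr * c + p := hsum.symm
            have : u.out = x - (rr * c + p) := by rw [← hx]; ring
            rw [this]; ring
          rw [hrew]
          refine Submodule.neg_mem _ (Submodule.add_mem _ hp ?_)
          rw [pow_succ']
          exact Ideal.mul_mem_mul hε hc
        exact small_of_surjective hFsurj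
      -- the injection R/P^m -> R/P^(m+1) induced by multiplication by t
      set ι0 : R →ₗ[R] R ⧸ (P ^ (m + 1) : Ideal R) :=
        (P ^ (m + 1) : Ideal R).mkQ.comp (LinearMap.toSpanSingleton R R t) with hι0
    -- continue
      have hι0ker : (P ^ m : Ideal R) ≤ LinearMap.ker ι0 := by
        intro r hr
        have hmem : r • t ∈ (P ^ (m + 1) : Ideal R) := by
          rw [smul_eq_mul, pow_succ]
          exact Ideal.mul_mem_mul hr ht
        rw [LinearMap.mem_ker, hι0]
        show Submodule.Quotient.mk (r • t) = 0
        rwa [Submodule.Quotient.mk_eq_zero]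
      set ι : (R ⧸ (P ^ m : Ideal R)) →ₗ[R] R ⧸ (P ^ (m + 1) : Ideal R) :=
        (P ^ m : Ideal R).liftQ ι0 hι0ker with hι
      have hιinj : Function.Injective ι := by
        rw [← LinearMap.ker_eq_bot, hι]
        apply Submodule.ker_liftQ_eq_bot
        intro r hr
        rw [LinearMap.mem_ker, hι0] at hr
        have hr' : r * t ∈ (P ^ (m + 1) : Ideal R) := by
          rw [← smul_eq_mul]
          rwa [show ι0 r = Submodule.Quotient.mk (r • t) from rfl,
            Submodule.Quotient.mk_eq_zero] at hr
        exact mem_pow_of_mul_mem hPprime hPbot ht ht2 hr'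
      set g : (R ⧸ (P ^ m : Ideal R)) →ₗ[R] M :=
        (P ^ m : Ideal R).liftQ (LinearMap.toSpanSingleton R M z)
          (le_of_eq hztors.symm) with hg
      let eX := Shrink.linearEquiv.{v} R (R ⧸ (P ^ m : Ideal R))
      let eY := Shrink.linearEquiv.{v} R (R ⧸ (P ^ (m + 1) : Ideal R))
      obtain ⟨h, hh⟩ := Module.Injective.out
        (eY.symm.toLinearMap ∘ₗ ι ∘ₗ eX.toLinearMap)
        (by exact eY.symm.injective.comp (hιinj.comp eX.injective))
        (g ∘ₗ eX.toLinearMap)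
      set z' : M := h (eY.symm (Submodule.Quotient.mk 1)) with hz'
      have hcomm : ∀ q : R ⧸ (P ^ m : Ideal R), h (eY.symm (ι q)) = g q := by
        intro q
        have hq := hh (eX.symm q)
        simpa using hq
      have htz : t • z' = z := by
        have h1 : (ι (Submodule.Quotient.mk 1) : R ⧸ (P ^ (m + 1) : Ideal R))
            = t • Submodule.Quotient.mk 1 := by
          rw [hι, Submodule.liftQ_apply, hι0]
          show Submodule.Quotient.mk ((1 : R) • t)
            = t • (Submodule.Quotient.mk 1 : R ⧸ (P ^ (m + 1) : Ideal R))
          rw [one_smul, ← Submodule.Quotient.mk_smul, smul_eq_mul, mul_one]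
        have h2 : t • z' = h (eY.symm (ι (Submodule.Quotient.mk 1))) := by
          rw [hz', ← map_smul, ← map_smul, ← h1]
        rw [h2, hcomm, hg, Submodule.liftQ_apply]
        show (1 : R) • z = z
        rw [one_smul]
      have hzy : t ^ (n + 1) • z' = y := by
        rw [pow_succ, mul_smul, htz, hzn]
      have hz'0 : z' ≠ 0 := by
        intro hz'eq
        rw [hz'eq, smul_zero] at hzy
        exact hy0 hzy.symm
      have htor' : (P ^ (m + 1) : Ideal R) ≤ Ideal.torsionOf R M z' := by
        intro x hx
        rw [Ideal.mem_torsionOf_iff]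
        have h0 : x • (Submodule.Quotient.mk 1 : R ⧸ (P ^ (m + 1) : Ideal R)) = 0 := by
          rw [← Submodule.Quotient.mk_smul, smul_eq_mul, mul_one,
            Submodule.Quotient.mk_eq_zero]
          exact hx
        rw [hz', ← map_smul, ← map_smul, h0, map_zero, map_zero]
      obtain ⟨m', hm'le, hm'⟩ := pow_classify hPprime hPbot htor'
      refine ⟨z', m', ?_, hzy, hm'⟩
      rcases Nat.eq_zero_or_pos m' with h0 | h1
      · exfalso
        apply hz'0
        apply (Ideal.torsionOf_eq_top_iff (R := R) (M := M) z').mp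
        rw [hm', h0, pow_zero, Ideal.one_eq_top]
      · exact h1
  obtain ⟨z, m, hm1, hze, hztors⟩ := key e
  have ham : a ∈ P ^ m := by
    rw [← hztors, Ideal.mem_torsionOf_iff]; exact haM z
  have hme : m < e := by
    by_contra hme
    push_neg at hme
    exact he (Ideal.pow_le_pow_right hme ham)
  have hfin : t ^ e ∈ Ideal.torsionOf R M z := by
    rw [hztors]
    exact Ideal.pow_le_pow_right hme.le (Ideal.pow_mem_pow ht e)
  rw [Ideal.mem_torsionOf_iff, hze] at hfin
  exact hy0 hfin

end CaseB

theorem main_summand {M : Type v} [AddCommGroup M] [Module R M] [Module.Injective R M]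
    (ι : Type w) (f : ι → (M →ₗ[R] M)) :
    IsDirectSummand (⨆ i, LinearMap.range (f i)) := by
  by_cases hsmall : Small.{v} R
  · haveI := hsmall
    exact summand_of_baer (Module.Baer.of_injective ‹Module.Injective R M›) ι f
  · have hex : ∃ a : R, a ≠ 0 ∧ ∀ m : M, a • m = 0 := by
      by_contra hc
      push_neg at hc
      apply hsmall
      have hinj : Function.Injective (algebraMap R (Module.End R M)) := by
        intro x y hxy
        by_contra hne
        have hsub : x - y ≠ 0 := sub_ne_zero.mpr hne
        obtain ⟨m, hm⟩ := hc (x - y) hsub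
        apply hm
        rw [sub_smul]
        have : x • m = y • m := by
          have := congrArg (fun φ : Module.End R M => φ m) hxy
          simpa [Module.algebraMap_end_apply] using this
        rw [this, sub_self]
      exact small_of_injective hinj
    obtain ⟨a, ha, haM⟩ := hex
    haveI : Subsingleton M := subsingleton_of_unfaithful a ha haM
    haveI : Subsingleton (Submodule R M) := inferInstance
    exact ⟨⊥, by
      constructor
      · rw [disjoint_iff]
        exact Subsingleton.elim _ _
      · rw [codisjoint_iff]
        exact Subsingleton.elim _ _⟩

end DualCSBaerProof

end Helpers

/-- every injective module over a Dedekind domain is dual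
self-CS-Baer; in fact the sum of the images of any family of endomorphisms is a
direct summand. -/
theorem injective_dedekind_dualSelfCSBaer
    {R : Type*} [CommRing R] [IsDomain R] [IsDedekindDomain R]
    (M : Type*) [AddCommGroup M] [Module R M] [Module.Injective R M] :
    DualSelfCSBaer R M ∧
      ∀ (ι : Type*) (f : ι → (M →ₗ[R] M)),
        IsDirectSummand (⨆ i, LinearMap.range (f i)) := by
  refine ⟨?_, fun ι f => DualCSBaerProof.main_summand ι f⟩
  intro ι f
  refine ⟨⨆ i, LinearMap.range (f i), DualCSBaerProof.main_summand ι f, le_rfl,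
    fun X hKX hsup => ?_⟩
  rwa [sup_eq_right.mpr hKX] at hsup
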